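/- Let φ be an odd set composition of [n] with ℓ(φ) = ℓ. Then the poset P = {ψ : ψ an odd set composition of [n] with ψ ≤ φ}, under refinement order, is order-isomorphic to the poset P' = {α : α an odd composition of ℓ}, under refinement order; moreover, there is an order isomorphism f : P → P' with ℓ(f(ψ)) = ℓ(ψ) for every ψ ∈ P. -/

import Mathlib

/-- `φ` is a set composition of `[n]`. -/
def IsSetComposition (n : ℕ) (φ : List (Finset ℕ)) : Prop :=
  (∀ B ∈ φ, B.Nonempty) ∧ φ.Pairwise (fun B C => Disjoint B C) ∧
    φ.foldr (· ∪ ·) ∅ = Finset.Icc 1 n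

/-- Refinement order on set compositions: `ψ ≤ φ` iff every block of `ψ` is the union of
a chunk of consecutive blocks of `φ` (in order). -/
def CoarserLE (ψ φ : List (Finset ℕ)) : Prop :=
  ∃ L : List (List (Finset ℕ)), (∀ c ∈ L, c ≠ []) ∧ L.flatten = φ ∧
    ψ = L.map (fun c => c.foldr (· ∪ ·) ∅)

/-- `α` is a composition of `m`: a list of positive integers summing to `m`. -/
def IsComposition (m : ℕ) (α : List ℕ) : Prop :=
  (∀ a ∈ α, 0 < a) ∧ α.sum = m

/-- Refinement order on compositions: `β ≤ α` iff every part of `β` is the sum of a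
chunk of consecutive parts of `α` (in order). -/
def CoarserLEc (β α : List ℕ) : Prop :=
  ∃ L : List (List ℕ), (∀ c ∈ L, c ≠ []) ∧ L.flatten = α ∧ β = L.map List.sum

namespace Stmt16Aux

variable {X Y : Type*}

/-- split a list into chunks of prescribed sizes -/
def chunks : List ℕ → List X → List (List X)
  | [], _ => []
  | a :: as, l => l.take a :: chunks as (l.drop a)

@[simp] lemma chunks_nil (l : List X) : chunks [] l = [] := rfl

@[simp] lemma chunks_cons (a : ℕ) (as : List ℕ) (l : List X) :
    chunks (a :: as) l = l.take a :: chunks as (l.drop a) := rfl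

@[simp] lemma chunks_length (β : List ℕ) (l : List X) : (chunks β l).length = β.length := by
  induction β generalizing l with
  | nil => rfl
  | cons a as ih => simp [ih]

lemma chunks_flatten (β : List ℕ) (l : List X) : (chunks β l).flatten = l.take β.sum := by
  induction β generalizing l with
  | nil => simp
  | cons a as ih => simp [ih, List.take_add, List.sum_cons]

lemma chunks_append (β₁ β₂ : List ℕ) (l : List X) :
    chunks (β₁ ++ β₂) l = chunks β₁ l ++ chunks β₂ (l.drop β₁.sum) := by
  induction β₁ generalizing l with
  | nil => simp
  | cons a as ih => simp [ih, List.drop_drop, Nat.add_comm]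

lemma chunks_map (g : X → Y) (β : List ℕ) (l : List X) :
    chunks β (l.map g) = (chunks β l).map (List.map g) := by
  induction β generalizing l with
  | nil => rfl
  | cons a as ih => simp [ih, ← List.map_take, ← List.map_drop]

lemma chunks_flatten_self (L : List (List X)) :
    chunks (L.map List.length) L.flatten = L := by
  induction L with
  | nil => rfl
  | cons a as ih => simp [List.take_left, List.drop_left, ih]

lemma chunks_map_length {β : List ℕ} {l : List X} (h : β.sum ≤ l.length) :
    (chunks β l).map List.length = β := by
  induction β generalizing l with
  | nil => rfl
  | cons a as ih =>
    simp only [List.sum_cons] at h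
    have ha : a ≤ l.length := le_trans (Nat.le_add_right _ _) h
    have hd : as.sum ≤ (l.drop a).length := by
      simp [List.length_drop]; omega
    simp [List.length_take, ih hd]
    omega

lemma chunks_ne_nil {β : List ℕ} {l : List X} (hpos : ∀ x ∈ β, 0 < x)
    (h : β.sum ≤ l.length) : ∀ c ∈ chunks β l, c ≠ [] := by
  induction β generalizing l with
  | nil => simp
  | cons a as ih =>
    simp only [List.sum_cons] at h
    intro c hc
    rw [chunks_cons, List.mem_cons] at hc
    rcases hc with rfl | hc
    · have ha := hpos a (by simp)
      rw [← List.length_pos_iff, List.length_take]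
      omega
    · refine ih (fun x hx => hpos x (by simp [hx])) ?_ c hc
      simp [List.length_drop]; omega

lemma mem_chunks_sublist {β : List ℕ} {l : List X} {c : List X} (hc : c ∈ chunks β l) :
    c.Sublist l := by
  induction β generalizing l with
  | nil => simp at hc
  | cons a as ih =>
    rw [chunks_cons, List.mem_cons] at hc
    rcases hc with rfl | hc
    · exact List.take_sublist _ _
    · exact (ih hc).trans (List.drop_sublist _ _)

/-- the key "associativity" of chunking -/
lemma chunks_assoc (M : List (List ℕ)) (l : List X) :
    chunks (M.map List.sum) l
      = (chunks (M.map List.length) (chunks M.flatten l)).map List.flatten := by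
  induction M generalizing l with
  | nil => rfl
  | cons m M ih =>
    simp only [List.map_cons, List.flatten_cons, chunks_cons]
    rw [chunks_append]
    have h1 : (chunks m l ++ chunks M.flatten (l.drop m.sum)).take m.length = chunks m l := by
      conv_lhs => rw [show m.length = (chunks m l).length from (chunks_length m l).symm]
      exact List.take_left
    have h2 : (chunks m l ++ chunks M.flatten (l.drop m.sum)).drop m.length
        = chunks M.flatten (l.drop m.sum) := by
      conv_lhs => rw [show m.length = (chunks m l).length from (chunks_length m l).symm]
      exact List.drop_left
    rw [h1, h2, ih]
    simp [chunks_flatten]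

/-- union of a list of finsets -/
def uof (l : List (Finset ℕ)) : Finset ℕ := l.foldr (· ∪ ·) ∅

@[simp] lemma uof_nil : uof [] = ∅ := rfl

@[simp] lemma uof_cons (a : Finset ℕ) (l : List (Finset ℕ)) : uof (a :: l) = a ∪ uof l := rfl

lemma uof_append (a b : List (Finset ℕ)) : uof (a ++ b) = uof a ∪ uof b := by
  induction a with
  | nil => simp
  | cons x t ih => simp [ih, Finset.union_assoc]

lemma uof_flatten (L : List (List (Finset ℕ))) : uof L.flatten = uof (L.map uof) := by
  induction L with
  | nil => rfl
  | cons a as ih => simp [uof_append, ih]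

lemma mem_uof {x : ℕ} {l : List (Finset ℕ)} : x ∈ uof l ↔ ∃ B ∈ l, x ∈ B := by
  induction l with
  | nil => simp
  | cons a t ih => simp [ih]

lemma disjoint_uof_right {A : Finset ℕ} {l : List (Finset ℕ)}
    (h : ∀ B ∈ l, Disjoint A B) : Disjoint A (uof l) := by
  rw [Finset.disjoint_left]
  intro x hx hx2
  obtain ⟨B, hB, hxB⟩ := mem_uof.1 hx2
  exact Finset.disjoint_left.1 (h B hB) hx hxB

lemma disjoint_uof_uof {a b : List (Finset ℕ)}
    (h : ∀ A ∈ a, ∀ B ∈ b, Disjoint A B) : Disjoint (uof a) (uof b) := by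
  rw [Finset.disjoint_left]
  intro x hx hx2
  obtain ⟨A, hA, hxA⟩ := mem_uof.1 hx
  obtain ⟨B, hB, hxB⟩ := mem_uof.1 hx2
  exact Finset.disjoint_left.1 (h A hA B hB) hxA hxB

lemma card_uof {l : List (Finset ℕ)} (h : l.Pairwise (fun B C => Disjoint B C)) :
    (uof l).card = (l.map Finset.card).sum := by
  induction l with
  | nil => simp
  | cons a t ih =>
    rw [List.pairwise_cons] at h
    have := disjoint_uof_right h.1
    simp [Finset.card_union_of_disjoint this, ih h.2]

lemma uof_nonempty {l : List (Finset ℕ)} (hne : l ≠ []) (h : ∀ B ∈ l, B.Nonempty) :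
    (uof l).Nonempty := by
  cases l with
  | nil => exact absurd rfl hne
  | cons a t =>
    obtain ⟨x, hx⟩ := h a (by simp)
    exact ⟨x, by simp [hx]⟩

lemma pairwise_map_uof {L : List (List (Finset ℕ))}
    (h : L.flatten.Pairwise (fun B C => Disjoint B C)) :
    (L.map uof).Pairwise (fun B C => Disjoint B C) := by
  induction L with
  | nil => simp
  | cons a as ih =>
    simp only [List.flatten_cons, List.pairwise_append] at h
    simp only [List.map_cons, List.pairwise_cons]
    refine ⟨?_, ih h.2.1⟩
    intro b hb
    simp only [List.mem_map] at hb
    obtain ⟨c, hc, rfl⟩ := hb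
    refine disjoint_uof_uof fun A hA B hB => h.2.2 A hA B ?_
    exact List.mem_flatten.2 ⟨c, hc, hB⟩

lemma sum_mod_two {l : List ℕ} (h : ∀ x ∈ l, x % 2 = 1) : l.sum % 2 = l.length % 2 := by
  induction l with
  | nil => rfl
  | cons a t ih =>
    have ha := h a (by simp)
    have ht := ih (fun x hx => h x (by simp [hx]))
    simp only [List.sum_cons, List.length_cons]
    omega

lemma take_sum_strict {c : List ℕ} (hpos : ∀ x ∈ c, 0 < x) {i j : ℕ} (hij : i < j)
    (hj : j ≤ c.length) : (c.take i).sum < (c.take j).sum := by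
  have heq : c.take j = c.take i ++ (c.drop i).take (j - i) := by
    rw [← List.take_add]; congr 1; omega
  rw [heq, List.sum_append]
  have hne : (c.drop i).take (j - i) ≠ [] := by
    rw [← List.length_pos_iff, List.length_take, List.length_drop]
    omega
  have hp : 0 < ((c.drop i).take (j - i)).sum := by
    refine List.sum_pos _ (fun a ha => hpos a ?_) hne
    exact List.mem_of_mem_drop (List.mem_of_mem_take ha)
  omega

lemma take_sum_inj {c : List ℕ} (hpos : ∀ x ∈ c, 0 < x) {i j : ℕ} (hi : i ≤ c.length)
    (hj : j ≤ c.length) (h : (c.take i).sum = (c.take j).sum) : i = j := by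
  rcases lt_trichotomy i j with hlt | heq | hgt
  · exact absurd h (Nat.ne_of_lt (take_sum_strict hpos hlt hj))
  · exact heq
  · exact absurd h.symm (Nat.ne_of_lt (take_sum_strict hpos hgt hi))

lemma comp_chunks_sum_inj : ∀ {c α : List ℕ}, ∀ β : List ℕ, (∀ x ∈ c, 0 < x) →
    IsComposition c.length α → IsComposition c.length β →
    (chunks α c).map List.sum = (chunks β c).map List.sum → α = β := by
  intro c α
  induction α generalizing c with
  | nil =>
    intro β hpos hα hβ h
    have hl : β.length = 0 := by
      have := congrArg List.length h
      simpa using this.symm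
    exact (List.length_eq_zero_iff.1 hl).symm
  | cons x α' ih =>
    intro β hpos hα hβ h
    cases β with
    | nil =>
      exfalso
      have := congrArg List.length h
      simp at this
    | cons y β' =>
      simp only [chunks_cons, List.map_cons, List.cons.injEq] at h
      obtain ⟨h1, h2⟩ := h
      have hx : x ≤ c.length := by
        have := hα.2; simp only [List.sum_cons] at this; omega
      have hy : y ≤ c.length := by
        have := hβ.2; simp only [List.sum_cons] at this; omega
      have hxy : x = y := take_sum_inj hpos hx hy h1
      subst hxy
      have hα' : IsComposition (c.drop x).length α' := by
        refine ⟨fun a ha => hα.1 a (by simp [ha]), ?_⟩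
        have := hα.2; simp only [List.sum_cons] at this
        simp [List.length_drop]; omega
      have hβ' : IsComposition (c.drop x).length β' := by
        refine ⟨fun a ha => hβ.1 a (by simp [ha]), ?_⟩
        have := hβ.2; simp only [List.sum_cons] at this
        simp [List.length_drop]; omega
      have := ih β' (fun a ha => hpos a (List.mem_of_mem_drop ha)) hα' hβ' h2
      rw [this]

lemma G_mem {n : ℕ} {φ : List (Finset ℕ)} (hφ : IsSetComposition n φ)
    (hodd : ∀ B ∈ φ, Odd B.card) {α : List ℕ} (hα : IsComposition φ.length α)
    (hαodd : ∀ a ∈ α, Odd a) :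
    IsSetComposition n ((chunks α φ).map uof) ∧
    (∀ B ∈ (chunks α φ).map uof, Odd B.card) ∧ CoarserLE ((chunks α φ).map uof) φ := by
  have hflat : (chunks α φ).flatten = φ := by
    rw [chunks_flatten, hα.2, List.take_length]
  have hsum : α.sum ≤ φ.length := le_of_eq hα.2
  have hne := chunks_ne_nil hα.1 hsum
  have hsub : ∀ c ∈ chunks α φ, c.Sublist φ := fun c hc => mem_chunks_sublist hc
  refine ⟨⟨?_, ?_, ?_⟩, ?_, ?_⟩
  · intro B hB
    obtain ⟨c, hc, rfl⟩ := List.mem_map.1 hB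
    exact uof_nonempty (hne c hc) (fun Z hZ => hφ.1 Z ((hsub c hc).subset hZ))
  · refine pairwise_map_uof ?_
    rw [hflat]
    exact hφ.2.1
  · show uof _ = _
    rw [← uof_flatten, hflat]
    exact hφ.2.2
  · intro B hB
    obtain ⟨c, hc, rfl⟩ := List.mem_map.1 hB
    have hpwc : c.Pairwise (fun B C => Disjoint B C) := hφ.2.1.sublist (hsub c hc)
    rw [Nat.odd_iff, card_uof hpwc, sum_mod_two]
    · have hlen : c.length ∈ α := by
        rw [← chunks_map_length hsum]
        exact List.mem_map_of_mem hc
      have := hαodd _ hlen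
      rw [Nat.odd_iff] at this
      simpa using this
    · intro x hx
      obtain ⟨Z, hZ, rfl⟩ := List.mem_map.1 hx
      rw [← Nat.odd_iff]
      exact hodd Z ((hsub c hc).subset hZ)
  · exact ⟨chunks α φ, hne, hflat, rfl⟩

lemma G_inj {φ : List (Finset ℕ)} (hφne : ∀ B ∈ φ, B.Nonempty)
    (hpw : φ.Pairwise (fun B C => Disjoint B C)) {α β : List ℕ}
    (hα : IsComposition φ.length α) (hβ : IsComposition φ.length β)
    (h : (chunks α φ).map uof = (chunks β φ).map uof) : α = β := by
  set c := φ.map Finset.card with hc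
  have hcpos : ∀ x ∈ c, 0 < x := by
    intro x hx
    obtain ⟨B, hB, rfl⟩ := List.mem_map.1 hx
    exact Finset.card_pos.2 (hφne B hB)
  have hclen : c.length = φ.length := List.length_map _
  have key : ∀ γ : List ℕ, (chunks γ c).map List.sum
      = ((chunks γ φ).map uof).map Finset.card := by
    intro γ
    rw [hc, chunks_map Finset.card γ φ, List.map_map, List.map_map]
    apply List.map_congr_left
    intro ch hch
    have hpwc := hpw.sublist (mem_chunks_sublist hch)
    simp [Function.comp, card_uof hpwc]
  refine comp_chunks_sum_inj β hcpos (by rw [hclen]; exact hα) (by rw [hclen]; exact hβ) ?_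
  rw [key α, key β, h]

lemma G_surj {φ : List (Finset ℕ)} (hpw : φ.Pairwise (fun B C => Disjoint B C))
    (hodd : ∀ B ∈ φ, Odd B.card) {ψ : List (Finset ℕ)} (hψodd : ∀ B ∈ ψ, Odd B.card)
    (hle : CoarserLE ψ φ) :
    ∃ α, (IsComposition φ.length α ∧ ∀ a ∈ α, Odd a) ∧ (chunks α φ).map uof = ψ := by
  obtain ⟨L, hLne, hLflat, rfl⟩ := hle
  refine ⟨L.map List.length, ⟨⟨?_, ?_⟩, ?_⟩, ?_⟩
  · intro a ha
    obtain ⟨ch, hch, rfl⟩ := List.mem_map.1 ha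
    exact List.length_pos_iff.2 (hLne ch hch)
  · calc (L.map List.length).sum = L.flatten.length := List.length_flatten.symm
    _ = φ.length := by rw [hLflat]
  · intro a ha
    obtain ⟨ch, hch, rfl⟩ := List.mem_map.1 ha
    have hsub : ch.Sublist φ := hLflat ▸ List.sublist_flatten_of_mem hch
    have hpwc := hpw.sublist hsub
    have hB : Odd (uof ch).card := hψodd _ (List.mem_map_of_mem hch)
    rw [card_uof hpwc, Nat.odd_iff, sum_mod_two] at hB
    · rw [Nat.odd_iff]; simpa using hB
    · intro x hx
      obtain ⟨Z, hZ, rfl⟩ := List.mem_map.1 hx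
      rw [← Nat.odd_iff]
      exact hodd Z (hsub.subset hZ)
  · rw [← hLflat, chunks_flatten_self]
    rfl

lemma key_calc (M : List (List ℕ)) (φ : List (Finset ℕ)) :
    (chunks (M.map List.sum) φ).map uof
      = (chunks (M.map List.length) ((chunks M.flatten φ).map uof)).map uof := by
  rw [chunks_assoc, chunks_map uof, List.map_map, List.map_map]
  apply List.map_congr_left
  intro G hG
  exact uof_flatten G

lemma le_of_lec {φ : List (Finset ℕ)} {α₁ α₂ : List ℕ} (hα₂ : IsComposition φ.length α₂)
    (h : CoarserLEc α₁ α₂) :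
    CoarserLE ((chunks α₁ φ).map uof) ((chunks α₂ φ).map uof) := by
  obtain ⟨M, hMne, hMflat, rfl⟩ := h
  have hlensum : (M.map List.length).sum = ((chunks α₂ φ).map uof).length := by
    calc (M.map List.length).sum = M.flatten.length := List.length_flatten.symm
    _ = α₂.length := by rw [hMflat]
    _ = _ := by simp
  refine ⟨chunks (M.map List.length) ((chunks α₂ φ).map uof), ?_, ?_, ?_⟩
  · apply chunks_ne_nil
    · intro x hx
      obtain ⟨m, hm, rfl⟩ := List.mem_map.1 hx
      exact List.length_pos_iff.2 (hMne m hm)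
    · exact le_of_eq hlensum
  · rw [chunks_flatten, hlensum, List.take_length]
  · have := key_calc M φ
    rw [hMflat] at this
    exact this

lemma lec_of_le {φ : List (Finset ℕ)} (hφne : ∀ B ∈ φ, B.Nonempty)
    (hpw : φ.Pairwise (fun B C => Disjoint B C)) {α₁ α₂ : List ℕ}
    (hα₁ : IsComposition φ.length α₁) (hα₂ : IsComposition φ.length α₂)
    (h : CoarserLE ((chunks α₁ φ).map uof) ((chunks α₂ φ).map uof)) : CoarserLEc α₁ α₂ := by
  obtain ⟨L, hLne, hLflat, hψ⟩ := h
  have hψ' : (chunks α₁ φ).map uof = L.map uof := hψ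
  have sumlen : (L.map List.length).sum = α₂.length := by
    calc (L.map List.length).sum = L.flatten.length := List.length_flatten.symm
    _ = ((chunks α₂ φ).map uof).length := by rw [hLflat]
    _ = α₂.length := by simp
  set M := chunks (L.map List.length) α₂ with hM
  have hMflat : M.flatten = α₂ := by
    rw [hM, chunks_flatten, sumlen, List.take_length]
  have hMlen : M.map List.length = L.map List.length :=
    chunks_map_length (le_of_eq sumlen)
  have hMne : ∀ m ∈ M, m ≠ [] := by
    apply chunks_ne_nil
    · intro x hx
      obtain ⟨m, hm, rfl⟩ := List.mem_map.1 hx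
      exact List.length_pos_iff.2 (hLne m hm)
    · exact le_of_eq sumlen
  have hβ : IsComposition φ.length (M.map List.sum) := by
    constructor
    · intro a ha
      obtain ⟨m, hm, rfl⟩ := List.mem_map.1 ha
      refine List.sum_pos _ (fun x hx => hα₂.1 x ?_) (hMne m hm)
      exact (hMflat ▸ List.sublist_flatten_of_mem hm).subset hx
    · calc (M.map List.sum).sum = M.flatten.sum := List.sum_flatten.symm
      _ = α₂.sum := by rw [hMflat]
      _ = φ.length := hα₂.2
  have heq : (chunks (M.map List.sum) φ).map uof = (chunks α₁ φ).map uof := by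
    rw [key_calc, hMflat, hMlen, ← hLflat, chunks_flatten_self, hψ']
  refine ⟨M, hMne, hMflat, ?_⟩
  exact (G_inj hφne hpw hβ hα₁ heq).symm

end Stmt16Aux

open Stmt16Aux in
theorem stmt16 (n : ℕ) (hn : 1 ≤ n) (φ : List (Finset ℕ))
    (hφ : IsSetComposition n φ) (hodd : ∀ B ∈ φ, Odd B.card) :
    ∃ f : {ψ : List (Finset ℕ) //
            IsSetComposition n ψ ∧ (∀ B ∈ ψ, Odd B.card) ∧ CoarserLE ψ φ} ≃
          {α : List ℕ // IsComposition φ.length α ∧ ∀ a ∈ α, Odd a},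
      (∀ ψ₁ ψ₂, CoarserLE ψ₁.1 ψ₂.1 ↔ CoarserLEc (f ψ₁).1 (f ψ₂).1) ∧
      (∀ ψ, (f ψ).1.length = ψ.1.length) := by
  classical
  set G : {α : List ℕ // IsComposition φ.length α ∧ ∀ a ∈ α, Odd a} →
      {ψ : List (Finset ℕ) //
        IsSetComposition n ψ ∧ (∀ B ∈ ψ, Odd B.card) ∧ CoarserLE ψ φ} :=
    fun α => ⟨(chunks α.1 φ).map uof, G_mem hφ hodd α.2.1 α.2.2⟩ with hG
  have hinj : Function.Injective G := by
    intro α β h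
    have := congrArg Subtype.val h
    exact Subtype.ext (G_inj hφ.1 hφ.2.1 α.2.1 β.2.1 this)
  have hsurj : Function.Surjective G := by
    intro ψ
    obtain ⟨α, hα, hval⟩ := G_surj hφ.2.1 hodd ψ.2.2.1 ψ.2.2.2
    exact ⟨⟨α, hα⟩, Subtype.ext hval⟩
  have hbij : Function.Bijective G := ⟨hinj, hsurj⟩
  refine ⟨(Equiv.ofBijective G hbij).symm, ?_, ?_⟩
  · intro ψ₁ ψ₂
    have e1 : ψ₁.1 = (chunks ((Equiv.ofBijective G hbij).symm ψ₁).1 φ).map uof := by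
      conv_lhs => rw [← (Equiv.ofBijective G hbij).apply_symm_apply ψ₁]
      rfl
    have e2 : ψ₂.1 = (chunks ((Equiv.ofBijective G hbij).symm ψ₂).1 φ).map uof := by
      conv_lhs => rw [← (Equiv.ofBijective G hbij).apply_symm_apply ψ₂]
      rfl
    rw [e1, e2]
    constructor
    · exact lec_of_le hφ.1 hφ.2.1 ((Equiv.ofBijective G hbij).symm ψ₁).2.1
        ((Equiv.ofBijective G hbij).symm ψ₂).2.1
    · exact le_of_lec ((Equiv.ofBijective G hbij).symm ψ₂).2.1
  · intro ψ
    have e1 : ψ.1 = (chunks ((Equiv.ofBijective G hbij).symm ψ).1 φ).map uof := by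
      conv_lhs => rw [← (Equiv.ofBijective G hbij).apply_symm_apply ψ]
      rfl
    rw [e1]
    simp
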